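/- Let q be even (characteristic 2) and let C ⊆ Sym_{n,q} be an F_q-linear symmetric code containing Alt_{n,q}. Then the dual q-polymatroid of M[C] equals the q-polymatroid of the dual code C*: that is, for every subspace U ≤ F_q^n, n·dim U − ρ_C(F_q^n) + ρ_C(U^⊥) = ρ_{C*}(U). -/

import Mathlib

open Matrix Module

section Defs

variable {F : Type*} [Field F] {n : ℕ}

/-- The subspace of matrices whose column space is contained in `U`. -/
def colRes (U : Submodule F (Fin n → F)) : Submodule F (Matrix (Fin n) (Fin n) F) where
  carrier := {M | ∀ v : Fin n → F, M.mulVec v ∈ U}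
  add_mem' := by
    intro A B hA hB v
    rw [Matrix.add_mulVec]
    exact U.add_mem (hA v) (hB v)
  zero_mem' := by
    intro v
    rw [Matrix.zero_mulVec]
    exact U.zero_mem
  smul_mem' := by
    intro c A hA v
    rw [Matrix.smul_mulVec]
    exact U.smul_mem c (hA v)

/-- The orthogonal complement of `U` w.r.t. the standard inner product on `F^n`. -/
def perp (U : Submodule F (Fin n → F)) : Submodule F (Fin n → F) where
  carrier := {x | ∀ y ∈ U, ∑ i, x i * y i = 0}
  add_mem' := by
    intro a b ha hb y hy
    simp only [Pi.add_apply, add_mul]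
    rw [Finset.sum_add_distrib, ha y hy, hb y hy, add_zero]
  zero_mem' := by
    intro y hy
    simp
  smul_mem' := by
    intro c a ha y hy
    simp only [Pi.smul_apply, smul_eq_mul, mul_assoc]
    rw [← Finset.mul_sum, ha y hy, mul_zero]

/-- The rank function of the column `q`-polymatroid associated with a code. -/
noncomputable def rhoInt (C : Submodule F (Matrix (Fin n) (Fin n) F))
    (U : Submodule F (Fin n → F)) : ℤ :=
  (finrank F ↥C : ℤ) - (finrank F ↥(C ⊓ colRes (perp U)) : ℤ)

/-- The dual (w.r.t. the trace bilinear form) in `Sym_{n,q}` of a set `D`. -/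
def symDual (D : Set (Matrix (Fin n) (Fin n) F)) :
    Submodule F (Matrix (Fin n) (Fin n) F) where
  carrier := {B | Bᵀ = B ∧ ∀ A ∈ D, Matrix.trace (A * Bᵀ) = 0}
  add_mem' := by
    rintro B B' ⟨hB1, hB2⟩ ⟨hB'1, hB'2⟩
    refine ⟨by rw [Matrix.transpose_add, hB1, hB'1], fun A hA => ?_⟩
    rw [Matrix.transpose_add, Matrix.mul_add, Matrix.trace_add, hB2 A hA, hB'2 A hA,
      add_zero]
  zero_mem' := by simp
  smul_mem' := by
    rintro c B ⟨hB1, hB2⟩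
    refine ⟨by rw [Matrix.transpose_smul, hB1], fun A hA => ?_⟩
    rw [Matrix.transpose_smul, Matrix.mul_smul, Matrix.trace_smul, hB2 A hA, smul_zero]

end Defs

section Aux

variable {F : Type*} [Field F] {n : ℕ}

/-- The trace pairing `B ↦ (A ↦ ∑ᵢⱼ Aᵢⱼ Bᵢⱼ)` as a linear map to the dual. -/
noncomputable def pairMap : Matrix (Fin n) (Fin n) F →ₗ[F]
    Module.Dual F (Matrix (Fin n) (Fin n) F) where
  toFun B :=
    { toFun := fun A => ∑ i, ∑ j, A i j * B i j
      map_add' := by intro A A'; simp [add_mul, Finset.sum_add_distrib]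
      map_smul' := by intro c A; simp [Finset.mul_sum, mul_assoc] }
  map_add' := by intro B B'; ext A; simp [mul_add, Finset.sum_add_distrib]
  map_smul' := by
    intro c B; ext A
    simp [Finset.mul_sum, mul_assoc, mul_left_comm]

lemma pairMap_apply (B A : Matrix (Fin n) (Fin n) F) :
    pairMap B A = ∑ i, ∑ j, A i j * B i j := rfl

lemma pair_stdBasisMatrix (B : Matrix (Fin n) (Fin n) F) (i j : Fin n) :
    ∑ a, ∑ b, (Matrix.single i j (1 : F)) a b * B a b = B i j := by
  simp [Matrix.single, ite_and, Finset.sum_ite_eq, Finset.sum_ite_eq']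

lemma pairMap_injective : Function.Injective (pairMap (F := F) (n := n)) := by
  intro B B' h
  ext i j
  have h2 := congrArg (fun φ => φ (Matrix.single i j (1 : F))) h
  simpa [pairMap_apply, pair_stdBasisMatrix] using h2

/-- The trace pairing as a linear equivalence with the dual. -/
noncomputable def pairEquiv : Matrix (Fin n) (Fin n) F ≃ₗ[F]
    Module.Dual F (Matrix (Fin n) (Fin n) F) :=
  LinearMap.linearEquivOfInjective pairMap pairMap_injective
    Subspace.dual_finrank_eq.symm

/-- The orthogonal complement of a matrix code w.r.t. the trace pairing. -/
noncomputable def Dperp (D : Submodule F (Matrix (Fin n) (Fin n) F)) :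
    Submodule F (Matrix (Fin n) (Fin n) F) :=
  D.dualAnnihilator.comap (pairEquiv (F := F) (n := n) :
    Matrix (Fin n) (Fin n) F →ₗ[F] Module.Dual F (Matrix (Fin n) (Fin n) F))

lemma mem_Dperp {D : Submodule F (Matrix (Fin n) (Fin n) F)}
    {B : Matrix (Fin n) (Fin n) F} :
    B ∈ Dperp D ↔ ∀ A ∈ D, ∑ i, ∑ j, A i j * B i j = 0 := by
  have hp : ∀ A, (pairEquiv (F := F) (n := n) B) A = ∑ i, ∑ j, A i j * B i j := by
    intro A
    rw [pairEquiv, LinearMap.linearEquivOfInjective_apply, pairMap_apply]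
  simp only [Dperp, Submodule.mem_comap, LinearEquiv.coe_coe,
    Submodule.mem_dualAnnihilator, hp]

lemma finrank_comap_equiv {K M N : Type*} [Field K] [AddCommGroup M] [Module K M]
    [AddCommGroup N] [Module K N] (e : M ≃ₗ[K] N) (p : Submodule K N) :
    finrank K (p.comap (e : M →ₗ[K] N)) = finrank K p :=
  LinearEquiv.finrank_eq (LinearEquiv.ofSubmodule' e p)

lemma comap_equiv_sup {K M N : Type*} [Field K] [AddCommGroup M] [Module K M]
    [AddCommGroup N] [Module K N] (e : M ≃ₗ[K] N) (p q : Submodule K N) :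
    (p ⊔ q).comap (e : M →ₗ[K] N)
      = p.comap (e : M →ₗ[K] N) ⊔ q.comap (e : M →ₗ[K] N) := by
  refine le_antisymm ?_
    (sup_le (Submodule.comap_mono le_sup_left) (Submodule.comap_mono le_sup_right))
  intro x hx
  rw [Submodule.mem_comap] at hx
  rcases Submodule.mem_sup.1 hx with ⟨y, hy, z, hz, hyz⟩
  refine Submodule.mem_sup.2 ⟨e.symm y, ?_, e.symm z, ?_, ?_⟩
  · rw [Submodule.mem_comap]; simpa using hy
  · rw [Submodule.mem_comap]; simpa using hz
  · apply e.injective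
    simp only [map_add, LinearEquiv.coe_coe, LinearEquiv.apply_symm_apply]
    simpa using hyz

lemma finrank_add_finrank_dualAnnihilator {K V : Type*} [Field K] [AddCommGroup V]
    [Module K V] [FiniteDimensional K V] (W : Subspace K V) :
    finrank K W + finrank K W.dualAnnihilator = finrank K V := by
  rw [add_comm, ← (Subspace.quotEquivAnnihilator W).finrank_eq,
    Submodule.finrank_quotient_add_finrank]

lemma finrank_add_finrank_Dperp (D : Submodule F (Matrix (Fin n) (Fin n) F)) :
    finrank F D + finrank F (Dperp D) = n * n := by
  have h1 : finrank F (Dperp D) = finrank F D.dualAnnihilator :=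
    finrank_comap_equiv _ _
  rw [h1, finrank_add_finrank_dualAnnihilator, Module.finrank_matrix,
    Module.finrank_self, Fintype.card_fin, mul_one]

lemma Dperp_inf (D E : Submodule F (Matrix (Fin n) (Fin n) F)) :
    Dperp (D ⊓ E) = Dperp D ⊔ Dperp E := by
  simp only [Dperp]
  rw [Subspace.dualAnnihilator_inf_eq]
  exact comap_equiv_sup (pairEquiv (F := F) (n := n)) _ _

lemma mem_colRes {U : Submodule F (Fin n → F)} {M : Matrix (Fin n) (Fin n) F} :
    M ∈ colRes U ↔ ∀ v, M.mulVec v ∈ U := Iff.rfl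

lemma mem_perp {U : Submodule F (Fin n → F)} {x : Fin n → F} :
    x ∈ perp U ↔ ∀ y ∈ U, ∑ i, x i * y i = 0 := Iff.rfl

lemma col_mem_of_mem_colRes {U : Submodule F (Fin n → F)}
    {M : Matrix (Fin n) (Fin n) F} (hM : M ∈ colRes U) (j : Fin n) :
    (fun i => M i j) ∈ U := by
  have := hM (Pi.single j 1)
  rw [Matrix.mulVec_single] at this
  have h' : M.col j ∈ U := by simpa using this
  exact h'

lemma Dperp_colRes (U : Submodule F (Fin n → F)) :
    Dperp (colRes U) = colRes (perp U) := by
  ext B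
  rw [mem_Dperp]
  constructor
  · intro h v
    rw [mem_perp]
    intro y hy
    set A : Matrix (Fin n) (Fin n) F := Matrix.of fun i j => v j * y i with hA
    have hAmem : A ∈ colRes U := by
      intro w
      have hw : A.mulVec w = (∑ j, v j * w j) • y := by
        funext i
        simp only [Matrix.mulVec, dotProduct, hA, Matrix.of_apply,
          Pi.smul_apply, smul_eq_mul, Finset.sum_mul]
        exact Finset.sum_congr rfl fun j _ => by ring
      rw [hw]
      exact U.smul_mem _ hy
    have hp := h A hAmem
    have : ∑ i, (B.mulVec v) i * y i = ∑ i, ∑ j, A i j * B i j := by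
      simp only [Matrix.mulVec, dotProduct, hA, Matrix.of_apply,
        Finset.sum_mul]
      exact Finset.sum_congr rfl fun i _ => Finset.sum_congr rfl fun j _ => by ring
    rw [this, hp]
  · intro hB A hA
    rw [Finset.sum_comm]
    refine Finset.sum_eq_zero fun j _ => ?_
    have hcolB : (fun i => B i j) ∈ perp U := col_mem_of_mem_colRes hB j
    have hcolA : (fun i => A i j) ∈ U := col_mem_of_mem_colRes hA j
    have := hcolB _ hcolA
    simpa [mul_comm] using this

/-- `colRes U` is isomorphic to `n` copies of `U` (one per column). -/
noncomputable def colResEquiv (U : Submodule F (Fin n → F)) :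
    colRes U ≃ₗ[F] (Fin n → U) where
  toFun M j := ⟨fun i => M.1 i j, col_mem_of_mem_colRes M.2 j⟩
  invFun f := ⟨Matrix.of fun i j => (f j : Fin n → F) i, by
    intro v
    have hw : (Matrix.of fun i j => (f j : Fin n → F) i).mulVec v
        = ∑ j, v j • (f j : Fin n → F) := by
      funext i
      simp only [Matrix.mulVec, dotProduct, Matrix.of_apply,
        Finset.sum_apply, Pi.smul_apply, smul_eq_mul]
      exact Finset.sum_congr rfl fun j _ => by ring
    rw [hw]
    exact Submodule.sum_mem _ fun j _ => U.smul_mem _ (f j).2⟩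
  map_add' M N := by ext j i; rfl
  map_smul' c M := by ext j i; rfl
  left_inv M := by ext i j; rfl
  right_inv f := by ext j i; rfl

lemma finrank_colRes (U : Submodule F (Fin n → F)) :
    finrank F (colRes U) = n * finrank F U := by
  rw [(colResEquiv U).finrank_eq, Module.finrank_pi_fintype,
    Finset.sum_const, Finset.card_univ, Fintype.card_fin, smul_eq_mul]

/-- The pairing `x ↦ (y ↦ ∑ᵢ xᵢ yᵢ)` on `Fⁿ` as a linear map to the dual. -/
noncomputable def vecPair : (Fin n → F) →ₗ[F] Module.Dual F (Fin n → F) where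
  toFun x :=
    { toFun := fun y => ∑ i, x i * y i
      map_add' := by intro y y'; simp [mul_add, Finset.sum_add_distrib]
      map_smul' := by intro c y; simp [Finset.mul_sum, mul_left_comm] }
  map_add' := by intro x x'; ext y; simp [add_mul, Finset.sum_add_distrib]
  map_smul' := by intro c x; ext y; simp [Finset.mul_sum, mul_assoc]

lemma vecPair_injective : Function.Injective (vecPair (F := F) (n := n)) := by
  intro x x' h
  funext i
  have h2 := congrArg (fun φ => φ (Pi.single i (1 : F))) h
  simpa [vecPair, Pi.single_apply, mul_ite, Finset.sum_ite_eq, Finset.sum_ite_eq']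
    using h2

noncomputable def vecPairEquiv : (Fin n → F) ≃ₗ[F] Module.Dual F (Fin n → F) :=
  LinearMap.linearEquivOfInjective vecPair vecPair_injective
    Subspace.dual_finrank_eq.symm

lemma perp_eq_comap (U : Submodule F (Fin n → F)) :
    perp U = U.dualAnnihilator.comap (vecPairEquiv (F := F) (n := n) :
      (Fin n → F) →ₗ[F] Module.Dual F (Fin n → F)) := by
  ext x
  have hp : ∀ y, (vecPairEquiv (F := F) (n := n) x) y = ∑ i, x i * y i := by
    intro y
    rw [vecPairEquiv, LinearMap.linearEquivOfInjective_apply]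
    rfl
  simp only [mem_perp, Submodule.mem_comap, LinearEquiv.coe_coe,
    Submodule.mem_dualAnnihilator, hp]

lemma finrank_add_finrank_perp (U : Submodule F (Fin n → F)) :
    finrank F U + finrank F (perp U) = n := by
  have h1 : finrank F (perp U) = finrank F U.dualAnnihilator := by
    rw [perp_eq_comap]
    exact finrank_comap_equiv _ _
  rw [h1, finrank_add_finrank_dualAnnihilator, Module.finrank_fin_fun]

lemma perp_perp (U : Submodule F (Fin n → F)) : perp (perp U) = U := by
  refine (Submodule.eq_of_le_of_finrank_le ?_ ?_).symm
  · intro y hy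
    rw [mem_perp]
    intro x hx
    have := hx y hy
    rw [← this]
    exact Finset.sum_congr rfl fun i _ => mul_comm _ _
  · have h1 := finrank_add_finrank_perp U
    have h2 := finrank_add_finrank_perp (perp U)
    omega

lemma perp_top : perp (⊤ : Submodule F (Fin n → F)) = ⊥ := by
  ext x
  simp only [Submodule.mem_bot, mem_perp]
  constructor
  · intro h
    funext i
    have := h (Pi.single i 1) trivial
    simpa [Pi.single_apply, mul_ite, Finset.sum_ite_eq, Finset.sum_ite_eq']
      using this
  · rintro rfl y _
    simp

lemma colRes_bot : colRes (⊥ : Submodule F (Fin n → F)) = ⊥ := by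
  ext M
  simp only [Submodule.mem_bot]
  constructor
  · intro h
    ext i j
    have h2 := h (Pi.single j 1)
    rw [Matrix.mulVec_single, Submodule.mem_bot] at h2
    simpa using congrFun h2 i
  · rintro rfl v
    rw [Matrix.zero_mulVec]
    exact Submodule.zero_mem _

lemma trace_mul_transpose_eq (A B : Matrix (Fin n) (Fin n) F) :
    Matrix.trace (A * Bᵀ) = ∑ i, ∑ j, A i j * B i j := by
  simp [Matrix.trace, Matrix.diag, Matrix.mul_apply]

lemma sum_add_pair (A A' B : Matrix (Fin n) (Fin n) F) :
    ∑ i, ∑ j, (A + A') i j * B i j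
      = (∑ i, ∑ j, A i j * B i j) + ∑ i, ∑ j, A' i j * B i j := by
  simp [add_mul, Finset.sum_add_distrib]

lemma symDual_eq_Dperp [CharP F 2] (C : Submodule F (Matrix (Fin n) (Fin n) F))
    (halt : ∀ M : Matrix (Fin n) (Fin n) F,
      (Mᵀ = -M ∧ ∀ i, M i i = 0) → M ∈ C) :
    symDual (C : Set (Matrix (Fin n) (Fin n) F)) = Dperp C := by
  ext B
  constructor
  · rintro ⟨_, hB2⟩
    rw [mem_Dperp]
    intro A hA
    have := hB2 A hA
    rwa [trace_mul_transpose_eq] at this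
  · intro hB
    rw [mem_Dperp] at hB
    have hsymB : Bᵀ = B := by
      ext i j
      rw [Matrix.transpose_apply]
      by_cases hij : i = j
      · rw [hij]
      · set M : Matrix (Fin n) (Fin n) F :=
          Matrix.single i j 1 + Matrix.single j i 1 with hM
        have hMT : Mᵀ = M := by
          ext a b
          simp only [hM, Matrix.transpose_apply, Matrix.add_apply,
            Matrix.single, Matrix.of_apply]
          rw [add_comm]
          congr 1 <;> simp [and_comm]
        have hMC : M ∈ C := by
          have hnegM : -M = M := by
            ext a b
            rw [Matrix.neg_apply, CharTwo.neg_eq]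
          refine halt M ⟨by rw [hMT, hnegM], fun k => ?_⟩
          have h1 : ¬(i = k ∧ j = k) := fun h => hij (h.1.trans h.2.symm)
          have h2 : ¬(j = k ∧ i = k) := fun h => hij (h.2.trans h.1.symm)
          simp only [hM, Matrix.add_apply]
          rw [Matrix.single_apply_of_ne (h := h1),
            Matrix.single_apply_of_ne (h := h2), add_zero]
        have hp := hB M hMC
        rw [hM, sum_add_pair, pair_stdBasisMatrix, pair_stdBasisMatrix] at hp
        have h3 := neg_eq_of_add_eq_zero_right hp
        rw [← h3, CharTwo.neg_eq]
    exact ⟨hsymB, fun A hA => by rw [trace_mul_transpose_eq]; exact hB A hA⟩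

end Aux

/-- In characteristic `2`, for an `F_q`-linear symmetric code `C` containing
`Alt_{n,q}`, the dual `q`-polymatroid of `M[C]` equals the `q`-polymatroid of the dual
code `C*`: for every `U ≤ F_q^n`, `n·dim U − ρ_C(F_q^n) + ρ_C(U^⊥) = ρ_{C*}(U)`. -/
theorem dual_polymatroid_eq_polymatroid_of_dual_char_two
    {F : Type*} [Field F] [Fintype F] [CharP F 2] {n : ℕ}
    (C : Submodule F (Matrix (Fin n) (Fin n) F))
    (hsym : ∀ M ∈ C, Mᵀ = M)
    (halt : ∀ M : Matrix (Fin n) (Fin n) F, (Mᵀ = -M ∧ ∀ i, M i i = 0) → M ∈ C) :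
    ∀ U : Submodule F (Fin n → F),
      (n : ℤ) * finrank F ↥U - rhoInt C ⊤ + rhoInt C (perp U)
        = rhoInt (symDual (C : Set (Matrix (Fin n) (Fin n) F))) U := by
  intro U
  classical
  rw [symDual_eq_Dperp C halt]
  have h0 : C ⊓ colRes (perp (⊤ : Submodule F (Fin n → F))) = ⊥ := by
    rw [perp_top, colRes_bot, inf_bot_eq]
  have h1 := finrank_add_finrank_Dperp (C ⊓ colRes U)
  have h2 : Dperp (C ⊓ colRes U) = Dperp C ⊔ colRes (perp U) := by
    rw [Dperp_inf, Dperp_colRes]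
  rw [h2] at h1
  have h3 := Submodule.finrank_sup_add_finrank_inf_eq (Dperp C) (colRes (perp U))
  have h4 : finrank F (colRes (perp U)) = n * finrank F (perp U) := finrank_colRes _
  have h5 := finrank_add_finrank_perp U
  have h6 : n * finrank F U + n * finrank F (perp U) = n * n := by
    rw [← mul_add, h5]
  rw [h4] at h3
  unfold rhoInt
  rw [h0, perp_perp, finrank_bot]
  push_cast at h1 h3 h6 ⊢
  linarith
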